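/- A graph G with exactly three or exactly four connected components is the niche graph of some bipartite tournament if and only if every connected component of G is a complete graph. -/

import Mathlib

structure BipTournament (α : Type*) where
  U : Set α
  V : Set α
  A : α → α → Prop
  disj : Disjoint U V
  cover : U ∪ V = Set.univ
  orient : ∀ u ∈ U, ∀ v ∈ V, Xor' (A u v) (A v u)
  arcs : ∀ x y, A x y → (x ∈ U ∧ y ∈ V) ∨ (x ∈ V ∧ y ∈ U)

def BipTournament.outN {α : Type*} (D : BipTournament α) (x : α) : Set α := {y | D.A x y}

def BipTournament.inN {α : Type*} (D : BipTournament α) (x : α) : Set α := {y | D.A y x}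

def BipTournament.niche {α : Type*} (D : BipTournament α) : SimpleGraph α where
  Adj x y := x ≠ y ∧ ((∃ w, D.A x w ∧ D.A y w) ∨ (∃ w, D.A w x ∧ D.A w y))
  symm := by
    constructor
    rintro x y ⟨h, h'⟩
    exact ⟨h.symm, h'.imp (fun ⟨w, a, b⟩ => ⟨w, b, a⟩) (fun ⟨w, a, b⟩ => ⟨w, b, a⟩)⟩
  loopless := ⟨fun x h => h.1 rfl⟩

namespace BipTournament
variable {α : Type*} (D : BipTournament α)

lemma mem_or (a : α) : a ∈ D.U ∨ a ∈ D.V := by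
  have h : a ∈ D.U ∪ D.V := by rw [D.cover]; trivial
  exact h

lemma not_both {a : α} (h1 : a ∈ D.U) (h2 : a ∈ D.V) : False :=
  Set.disjoint_left.mp D.disj h1 h2

lemma arc_snd_V {a w : α} (ha : a ∈ D.U) (h : D.A a w) : w ∈ D.V := by
  rcases D.arcs a w h with ⟨_, hw⟩ | ⟨ha', _⟩
  · exact hw
  · exact (D.not_both ha ha').elim

lemma arc_fst_V {a w : α} (ha : a ∈ D.U) (h : D.A w a) : w ∈ D.V := by
  rcases D.arcs w a h with ⟨_, ha'⟩ | ⟨hw, _⟩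
  · exact (D.not_both ha ha').elim
  · exact hw

def swap : BipTournament α where
  U := D.V
  V := D.U
  A := D.A
  disj := D.disj.symm
  cover := by rw [Set.union_comm]; exact D.cover
  orient := fun u hu v hv => (D.orient v hv u hu).symm
  arcs := fun x y h => (D.arcs x y h).symm

lemma swap_niche : D.swap.niche = D.niche := rfl

lemma adj_part {a b : α} (ha : a ∈ D.U) (h : D.niche.Adj a b) : b ∈ D.U := by
  obtain ⟨hne, ⟨w, h1, h2⟩ | ⟨w, h1, h2⟩⟩ := h
  · have hw := D.arc_snd_V ha h1
    rcases D.arcs b w h2 with ⟨hb, _⟩ | ⟨_, hw'⟩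
    · exact hb
    · exact (D.not_both hw' hw).elim
  · have hw := D.arc_fst_V ha h1
    rcases D.arcs w b h2 with ⟨hw', _⟩ | ⟨_, hb⟩
    · exact (D.not_both hw' hw).elim
    · exact hb

lemma walk_part {a b : α} (p : D.niche.Walk a b) (ha : a ∈ D.U) : b ∈ D.U := by
  induction p with
  | nil => exact ha
  | cons h p ih => exact ih (D.adj_part ha h)

lemma reach_part {a b : α} (h : D.niche.Reachable a b) (ha : a ∈ D.U) : b ∈ D.U :=
  h.elim fun p => D.walk_part p ha

lemma compl_of_nonadj {x y : α} (hx : x ∈ D.U) (hy : y ∈ D.U) (hne : x ≠ y)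
    (hnadj : ¬ D.niche.Adj x y) : ∀ v ∈ D.V, (D.A x v ↔ ¬ D.A y v) := by
  intro v hv
  have o1 := D.orient x hx v hv
  have o2 := D.orient y hy v hv
  have hno : ¬ (D.A x v ∧ D.A y v) := fun ⟨h1, h2⟩ => hnadj ⟨hne, Or.inl ⟨v, h1, h2⟩⟩
  have hni : ¬ (D.A v x ∧ D.A v y) := fun ⟨h1, h2⟩ => hnadj ⟨hne, Or.inr ⟨v, h1, h2⟩⟩
  unfold Xor' Xor at o1 o2
  tauto

lemma nonadj_of_compl {a b : α} (ha : a ∈ D.U) (hb : b ∈ D.U)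
    (hc : ∀ v ∈ D.V, (D.A a v ↔ ¬ D.A b v)) : ¬ D.niche.Adj a b := by
  rintro ⟨hne, ⟨w, h1, h2⟩ | ⟨w, h1, h2⟩⟩
  · exact (hc w (D.arc_snd_V ha h1)).mp h1 h2
  · have hw := D.arc_fst_V ha h1
    have oa := D.orient a ha w hw
    have ob := D.orient b hb w hw
    have hcw := hc w hw
    unfold Xor' Xor at oa ob
    tauto

end BipTournament

lemma fin3_cases : ∀ k j i1 i2 : Fin 3, i1 ≠ j → i2 ≠ j → i1 ≠ i2 →
    (k = j ∨ k = i1 ∨ k = i2) := by decide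

set_option maxHeartbeats 1000000 in
open SimpleGraph in
lemma master {α : Type*} [Fintype α] (D : BipTournament α)
    (hU : D.U.Nonempty) (hV : D.V.Nonempty)
    (hcard : Nat.card D.niche.ConnectedComponent = 3 ∨
      Nat.card D.niche.ConnectedComponent = 4)
    {x y : α} (hx : x ∈ D.U) (hr : D.niche.Reachable x y) (hne : x ≠ y)
    (hnadj : ¬ D.niche.Adj x y) : False := by
  classical
  obtain ⟨v0, hv0⟩ := hV
  obtain ⟨u0, hu0⟩ := hU
  have hy : y ∈ D.U := D.reach_part hr hx
  have hcompl := D.compl_of_nonadj hx hy hne hnadj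
  -- frontier argument: find z ∈ U whose "class" differs from both x's and y's
  have hzex : ∃ z, z ∈ D.U ∧ (¬ ∀ v ∈ D.V, (D.A z v ↔ D.A x v)) ∧
      (¬ ∀ v ∈ D.V, (D.A z v ↔ D.A y v)) := by
    obtain ⟨p⟩ := hr
    have hxS : x ∈ {u | ∀ v ∈ D.V, (D.A u v ↔ D.A x v)} := fun v hv => Iff.rfl
    have hyS : y ∉ {u | ∀ v ∈ D.V, (D.A u v ↔ D.A x v)} := by
      intro hyS
      have h1 := hyS v0 hv0
      have h2 := hcompl v0 hv0
      tauto
    obtain ⟨d, hd, hdf, hds⟩ := p.exists_boundary_dart _ hxS hyS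
    have hadjd : D.niche.Adj d.toProd.1 d.toProd.2 := d.adj
    have hfU : d.toProd.1 ∈ D.U :=
      D.reach_part ⟨p.takeUntil _ (p.dart_fst_mem_support_of_mem_darts hd)⟩ hx
    have hzU : d.toProd.2 ∈ D.U :=
      D.reach_part ⟨p.takeUntil _ (p.dart_snd_mem_support_of_mem_darts hd)⟩ hx
    refine ⟨d.toProd.2, hzU, hds, ?_⟩
    intro hzy
    refine D.nonadj_of_compl hfU hzU (fun v hv => ?_) hadjd
    have h1 := hdf v hv
    have h2 := hcompl v hv
    have h3 := hzy v hv
    tauto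
  obtain ⟨z, hzU, hzx, hzy⟩ := hzex
  -- component bookkeeping
  have noU : ∀ u ∈ D.U, D.niche.connectedComponentMk u = D.niche.connectedComponentMk x := by
    intro u hu
    by_contra hne'
    have hnr : ¬ D.niche.Reachable u x := fun h => hne' (ConnectedComponent.eq.mpr h)
    have hnadjux : ¬ D.niche.Adj u x := fun h => hnr h.reachable
    have hneux : u ≠ x := by rintro rfl; exact hnr (Reachable.refl _)
    have hnry : ¬ D.niche.Reachable u y := fun h => hnr (h.trans hr.symm)
    have hnadjuy : ¬ D.niche.Adj u y := fun h => hnry h.reachable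
    have hneuy : u ≠ y := by rintro rfl; exact hnry (Reachable.refl _)
    have c1 := D.compl_of_nonadj hu hx hneux hnadjux v0 hv0
    have c2 := D.compl_of_nonadj hu hy hneuy hnadjuy v0 hv0
    have c3 := hcompl v0 hv0
    tauto
  have hVnonadj : ∀ a b : α, a ∈ D.V → b ∈ D.V →
      D.niche.connectedComponentMk a ≠ D.niche.connectedComponentMk b →
      ∀ u ∈ D.U, (D.A a u ↔ ¬ D.A b u) := by
    intro a b ha hb hab
    have hnr : ¬ D.niche.Reachable a b := fun h => hab (ConnectedComponent.eq.mpr h)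
    have hnadj' : ¬ D.niche.Adj a b := fun h => hnr h.reachable
    have hne' : a ≠ b := by rintro rfl; exact hnr (Reachable.refl _)
    exact D.swap.compl_of_nonadj ha hb hne' hnadj'
  have threeV : ∀ v1 v2 v3 : α, v1 ∈ D.V → v2 ∈ D.V → v3 ∈ D.V →
      D.niche.connectedComponentMk v1 ≠ D.niche.connectedComponentMk v2 →
      D.niche.connectedComponentMk v1 ≠ D.niche.connectedComponentMk v3 →
      D.niche.connectedComponentMk v2 ≠ D.niche.connectedComponentMk v3 → False := by
    intro v1 v2 v3 h1 h2 h3 n12 n13 n23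
    have c12 := hVnonadj v1 v2 h1 h2 n12
    have c13 := hVnonadj v1 v3 h1 h3 n13
    have heq : ∀ u ∈ D.U, (D.A v2 u ↔ D.A v3 u) := by
      intro u hu
      have a1 := c12 u hu
      have a2 := c13 u hu
      tauto
    have hne23 : v2 ≠ v3 := by rintro rfl; exact n23 rfl
    refine n23 (ConnectedComponent.eq.mpr (Adj.reachable ?_))
    by_cases h : D.A v2 u0
    · exact ⟨hne23, Or.inl ⟨u0, h, (heq u0 hu0).mp h⟩⟩
    · have o2 := D.orient u0 hu0 v2 h2
      have o3 := D.orient u0 hu0 v3 h3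
      have h' : ¬ D.A v3 u0 := fun hh => h ((heq u0 hu0).mpr hh)
      unfold Xor' Xor at o2 o3
      refine ⟨hne23, Or.inr ⟨u0, ?_, ?_⟩⟩ <;> tauto
  -- extract two V-components distinct from the component of x
  rcases hcard with h3 | h4
  swap
  · -- card = 4 : impossible
    have e := Finite.equivFinOfCardEq h4
    have hpick : ∀ j : Fin 4, ∃ i1 i2 i3 : Fin 4, i1 ≠ j ∧ i2 ≠ j ∧ i3 ≠ j ∧
        i1 ≠ i2 ∧ i1 ≠ i3 ∧ i2 ≠ i3 := by decide
    obtain ⟨i1, i2, i3, hj1, hj2, hj3, h12, h13, h23⟩ :=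
      hpick (e (D.niche.connectedComponentMk x))
    have hrep : ∀ i : Fin 4, i ≠ e (D.niche.connectedComponentMk x) →
        ∃ a, a ∈ D.V ∧ D.niche.connectedComponentMk a = e.symm i := by
      intro i hi
      obtain ⟨a, ha⟩ := (e.symm i).exists_rep
      have ha' : D.niche.connectedComponentMk a = e.symm i := ha
      refine ⟨a, ?_, ha'⟩
      rcases D.mem_or a with hU' | hV'
      · exfalso
        apply hi
        have h' := noU a hU'
        rw [ha'] at h'
        rw [← h', Equiv.apply_symm_apply]
      · exact hV'
    obtain ⟨a1, ha1, hc1⟩ := hrep i1 hj1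
    obtain ⟨a2, ha2, hc2⟩ := hrep i2 hj2
    obtain ⟨a3, ha3, hc3⟩ := hrep i3 hj3
    refine threeV a1 a2 a3 ha1 ha2 ha3 ?_ ?_ ?_
    · rw [hc1, hc2]; intro hh; exact h12 (e.symm.injective hh)
    · rw [hc1, hc3]; intro hh; exact h13 (e.symm.injective hh)
    · rw [hc2, hc3]; intro hh; exact h23 (e.symm.injective hh)
  · -- card = 3
    have e := Finite.equivFinOfCardEq h3
    have hpick : ∀ j : Fin 3, ∃ i1 i2 : Fin 3, i1 ≠ j ∧ i2 ≠ j ∧ i1 ≠ i2 := by decide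
    obtain ⟨i1, i2, hj1, hj2, h12⟩ := hpick (e (D.niche.connectedComponentMk x))
    have hrep : ∀ i : Fin 3, i ≠ e (D.niche.connectedComponentMk x) →
        ∃ a, a ∈ D.V ∧ D.niche.connectedComponentMk a = e.symm i := by
      intro i hi
      obtain ⟨a, ha⟩ := (e.symm i).exists_rep
      have ha' : D.niche.connectedComponentMk a = e.symm i := ha
      refine ⟨a, ?_, ha'⟩
      rcases D.mem_or a with hU' | hV'
      · exfalso
        apply hi
        have h' := noU a hU'
        rw [ha'] at h'
        rw [← h', Equiv.apply_symm_apply]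
      · exact hV'
    obtain ⟨v1, hv1, hc1⟩ := hrep i1 hj1
    obtain ⟨v2, hv2, hc2⟩ := hrep i2 hj2
    have hcv12 : D.niche.connectedComponentMk v1 ≠ D.niche.connectedComponentMk v2 := by
      rw [hc1, hc2]
      intro hh
      exact h12 (e.symm.injective hh)
    -- every vertex of V lies in the component of v1 or of v2
    have hVcomp : ∀ v ∈ D.V, D.niche.connectedComponentMk v = D.niche.connectedComponentMk v1 ∨
        D.niche.connectedComponentMk v = D.niche.connectedComponentMk v2 := by
      intro v hv
      rcases fin3_cases (e (D.niche.connectedComponentMk v))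
          (e (D.niche.connectedComponentMk x)) i1 i2 hj1 hj2 h12 with h | h | h
      · exfalso
        have hcc : D.niche.connectedComponentMk v = D.niche.connectedComponentMk x :=
          e.injective h
        have hreach : D.niche.Reachable x v := (ConnectedComponent.eq.mp hcc).symm
        exact D.not_both (D.reach_part hreach hx) hv
      · left; rw [hc1, ← h, Equiv.symm_apply_apply]
      · right; rw [hc2, ← h, Equiv.symm_apply_apply]
    have c12 := hVnonadj v1 v2 hv1 hv2 hcv12
    -- all V classes are v1's or its complement
    have hVclass : ∀ v ∈ D.V, (∀ u ∈ D.U, (D.A v u ↔ D.A v1 u)) ∨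
        (∀ u ∈ D.U, (D.A v u ↔ ¬ D.A v1 u)) := by
      intro v hv
      rcases hVcomp v hv with h | h
      · left
        intro u hu
        by_cases hvv : D.niche.connectedComponentMk v = D.niche.connectedComponentMk v2
        · exact absurd (h ▸ hvv) hcv12
        · have cc := hVnonadj v v2 hv hv2 hvv u hu
          have hd := c12 u hu
          tauto
      · right
        intro u hu
        by_cases hvv : D.niche.connectedComponentMk v = D.niche.connectedComponentMk v1
        · exact absurd (hvv.symm.trans h) hcv12
        · exact hVnonadj v v1 hv hv1 hvv u hu
    -- key: vertices of U with the same relation to v1 have identical classes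
    have key : ∀ a ∈ D.U, ∀ b ∈ D.U, (D.A v1 a ↔ D.A v1 b) →
        ∀ v ∈ D.V, (D.A a v ↔ D.A b v) := by
      intro a ha b hb hab v hv
      have oa := D.orient a ha v hv
      have ob := D.orient b hb v hv
      unfold Xor' Xor at oa ob
      rcases hVclass v hv with hc | hc
      · have h1 := hc a ha
        have h2 := hc b hb
        tauto
      · have h1 := hc a ha
        have h2 := hc b hb
        tauto
    have hbxy : ¬ (D.A v1 x ↔ D.A v1 y) := by
      have h1 := hcompl v1 hv1
      have ox := D.orient x hx v1 hv1
      have oy := D.orient y hy v1 hv1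
      unfold Xor' Xor at ox oy
      tauto
    by_cases hb : D.A v1 z ↔ D.A v1 x
    · exact hzx (key z hzU x hx hb)
    · have hb' : D.A v1 z ↔ D.A v1 y := by tauto
      exact hzy (key z hzU y hy hb')

open SimpleGraph in
lemma construct3 {α : Type*} [Fintype α] (G : SimpleGraph α)
    (h3 : Nat.card G.ConnectedComponent = 3)
    (hcl : ∀ x y : α, G.Reachable x y → x ≠ y → G.Adj x y) :
    ∃ D : BipTournament α, D.U.Nonempty ∧ D.V.Nonempty ∧ D.niche = G := by
  classical
  have e : G.ConnectedComponent ≃ Fin 3 := Finite.equivFinOfCardEq h3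
  set f : α → Fin 3 := fun a => e (G.connectedComponentMk a) with hf
  have hsurj : ∀ i, ∃ a, f a = i := by
    intro i
    obtain ⟨a, ha⟩ := (e.symm i).exists_rep
    have ha' : G.connectedComponentMk a = e.symm i := ha
    exact ⟨a, by rw [hf]; simp only [ha', Equiv.apply_symm_apply]⟩
  have hfeq : ∀ a b, f a = f b ↔ G.Reachable a b := by
    intro a b
    constructor
    · intro h
      exact ConnectedComponent.eq.mp (e.injective h)
    · intro h
      simp only [hf]
      rw [ConnectedComponent.eq.mpr h]
  have hadj : ∀ a b, G.Adj a b ↔ (a ≠ b ∧ f a = f b) := by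
    intro a b
    exact ⟨fun h => ⟨h.ne, (hfeq a b).mpr h.reachable⟩,
      fun ⟨h1, h2⟩ => hcl a b ((hfeq a b).mp h2) h1⟩
  have hca : ∀ i : Fin 3, i = 0 ∨ i = 1 ∨ i = 2 := by decide
  refine ⟨⟨{a | f a ≠ 2}, {a | f a = 2},
      fun a b => (f a = 0 ∧ f b = 2) ∨ (f a = 2 ∧ f b = 1), ?_, ?_, ?_, ?_⟩, ?_, ?_, ?_⟩
  · exact Set.disjoint_left.mpr fun {a} h1 h2 => h1 h2
  · ext a; simp only [Set.mem_union, Set.mem_setOf_eq, Set.mem_univ, iff_true]; tauto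
  · intro u hu v hv
    have hu' : f u ≠ 2 := hu
    have hv' : f v = 2 := hv
    rcases hca (f u) with h | h | h
    · unfold Xor'; simp only [h, hv']; decide
    · unfold Xor'; simp only [h, hv']; decide
    · exact absurd h hu'
  · rintro a b (⟨h1, h2⟩ | ⟨h1, h2⟩)
    · exact Or.inl ⟨by rw [Set.mem_setOf_eq, h1]; decide, h2⟩
    · exact Or.inr ⟨h1, by rw [Set.mem_setOf_eq, h2]; decide⟩
  · obtain ⟨a, ha⟩ := hsurj 0
    exact ⟨a, by rw [Set.mem_setOf_eq, ha]; decide⟩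
  · obtain ⟨a, ha⟩ := hsurj 2
    exact ⟨a, ha⟩
  · ext a b
    show (a ≠ b ∧ _) ↔ G.Adj a b
    rw [hadj a b]
    refine and_congr_right fun hab => ?_
    constructor
    · rintro (⟨w, hw1, hw2⟩ | ⟨w, hw1, hw2⟩) <;>
        rcases hw1 with ⟨h1, h2⟩ | ⟨h1, h2⟩ <;>
        rcases hw2 with ⟨h3, h4⟩ | ⟨h3, h4⟩ <;>
        simp_all
    · intro hfab
      rcases hca (f a) with h | h | h
      · obtain ⟨w, hw⟩ := hsurj 2
        exact Or.inl ⟨w, Or.inl ⟨h, hw⟩, Or.inl ⟨hfab ▸ h, hw⟩⟩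
      · obtain ⟨w, hw⟩ := hsurj 2
        exact Or.inr ⟨w, Or.inr ⟨hw, h⟩, Or.inr ⟨hw, hfab ▸ h⟩⟩
      · obtain ⟨w, hw⟩ := hsurj 1
        exact Or.inl ⟨w, Or.inr ⟨h, hw⟩, Or.inr ⟨hfab ▸ h, hw⟩⟩

open SimpleGraph in
lemma construct4 {α : Type*} [Fintype α] (G : SimpleGraph α)
    (h4 : Nat.card G.ConnectedComponent = 4)
    (hcl : ∀ x y : α, G.Reachable x y → x ≠ y → G.Adj x y) :
    ∃ D : BipTournament α, D.U.Nonempty ∧ D.V.Nonempty ∧ D.niche = G := by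
  classical
  have e : G.ConnectedComponent ≃ Fin 4 := Finite.equivFinOfCardEq h4
  set f : α → Fin 4 := fun a => e (G.connectedComponentMk a) with hf
  have hsurj : ∀ i, ∃ a, f a = i := by
    intro i
    obtain ⟨a, ha⟩ := (e.symm i).exists_rep
    have ha' : G.connectedComponentMk a = e.symm i := ha
    exact ⟨a, by rw [hf]; simp only [ha', Equiv.apply_symm_apply]⟩
  have hfeq : ∀ a b, f a = f b ↔ G.Reachable a b := by
    intro a b
    constructor
    · intro h
      exact ConnectedComponent.eq.mp (e.injective h)
    · intro h
      simp only [hf]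
      rw [ConnectedComponent.eq.mpr h]
  have hadj : ∀ a b, G.Adj a b ↔ (a ≠ b ∧ f a = f b) := by
    intro a b
    exact ⟨fun h => ⟨h.ne, (hfeq a b).mpr h.reachable⟩,
      fun ⟨h1, h2⟩ => hcl a b ((hfeq a b).mp h2) h1⟩
  have hca : ∀ i : Fin 4, i = 0 ∨ i = 1 ∨ i = 2 ∨ i = 3 := by decide
  refine ⟨⟨{a | f a = 0 ∨ f a = 1}, {a | f a = 2 ∨ f a = 3},
      fun a b => (f a = 0 ∧ f b = 2) ∨ (f a = 2 ∧ f b = 1) ∨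
        (f a = 1 ∧ f b = 3) ∨ (f a = 3 ∧ f b = 0), ?_, ?_, ?_, ?_⟩, ?_, ?_, ?_⟩
  · refine Set.disjoint_left.mpr fun {a} h1 h2 => ?_
    rcases h1 with h1 | h1 <;> rcases h2 with h2 | h2 <;> rw [h1] at h2 <;> exact absurd h2 (by decide)
  · ext a
    simp only [Set.mem_union, Set.mem_setOf_eq, Set.mem_univ, iff_true]
    rcases hca (f a) with h | h | h | h <;> tauto
  · intro u hu v hv
    rcases hu with hu | hu <;> rcases hv with hv | hv <;>
      · unfold Xor'; simp only [hu, hv]; decide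
  · rintro a b (⟨h1, h2⟩ | ⟨h1, h2⟩ | ⟨h1, h2⟩ | ⟨h1, h2⟩)
    · exact Or.inl ⟨Or.inl h1, Or.inl h2⟩
    · exact Or.inr ⟨Or.inl h1, Or.inr h2⟩
    · exact Or.inl ⟨Or.inr h1, Or.inr h2⟩
    · exact Or.inr ⟨Or.inr h1, Or.inl h2⟩
  · obtain ⟨a, ha⟩ := hsurj 0
    exact ⟨a, Or.inl ha⟩
  · obtain ⟨a, ha⟩ := hsurj 2
    exact ⟨a, Or.inl ha⟩
  · ext a b
    show (a ≠ b ∧ _) ↔ G.Adj a b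
    rw [hadj a b]
    refine and_congr_right fun hab => ?_
    constructor
    · rintro (⟨w, hw1, hw2⟩ | ⟨w, hw1, hw2⟩) <;>
        rcases hw1 with ⟨h1, h2⟩ | ⟨h1, h2⟩ | ⟨h1, h2⟩ | ⟨h1, h2⟩ <;>
        rcases hw2 with ⟨h3, h4⟩ | ⟨h3, h4⟩ | ⟨h3, h4⟩ | ⟨h3, h4⟩ <;>
        simp_all
    · intro hfab
      rcases hca (f a) with h | h | h | h
      · obtain ⟨w, hw⟩ := hsurj 2
        exact Or.inl ⟨w, Or.inl ⟨h, hw⟩, Or.inl ⟨hfab ▸ h, hw⟩⟩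
      · obtain ⟨w, hw⟩ := hsurj 3
        exact Or.inl ⟨w, Or.inr (Or.inr (Or.inl ⟨h, hw⟩)),
          Or.inr (Or.inr (Or.inl ⟨hfab ▸ h, hw⟩))⟩
      · obtain ⟨w, hw⟩ := hsurj 1
        exact Or.inl ⟨w, Or.inr (Or.inl ⟨h, hw⟩), Or.inr (Or.inl ⟨hfab ▸ h, hw⟩)⟩
      · obtain ⟨w, hw⟩ := hsurj 0
        exact Or.inl ⟨w, Or.inr (Or.inr (Or.inr ⟨h, hw⟩)),
          Or.inr (Or.inr (Or.inr ⟨hfab ▸ h, hw⟩))⟩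

theorem stmt16 {α : Type*} [Fintype α] (G : SimpleGraph α)
    (h : Nat.card G.ConnectedComponent = 3 ∨ Nat.card G.ConnectedComponent = 4) :
    (∃ D : BipTournament α, D.U.Nonempty ∧ D.V.Nonempty ∧ D.niche = G) ↔
      (∀ x y : α, G.Reachable x y → x ≠ y → G.Adj x y) := by
  constructor
  · rintro ⟨D, hU, hV, rfl⟩ x y hr hne
    by_contra hnadj
    rcases D.mem_or x with hx | hx
    · exact master D hU hV h hx hr hne hnadj
    · exact master D.swap hV hU h hx hr hne hnadj
  · intro hcl
    rcases h with h3 | h4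
    · exact construct3 G h3 hcl
    · exact construct4 G h4 hcl
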